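/- arXiv:2502.09907 — 2 statements merged into one kernel-verified Lean document; each statement's English description precedes it below -/
import Mathlib

section
/- For every probability measure F on [0,1] and every bidding strategy s (Markov kernel) such that the induced bid distribution P_{s,F} is absolutely continuous with respect to Lebesgue measure: sup over all probability measures H on [0,1] of Reg_F(s,H) equals sup over h in [0,1] of R_F(s,h), which equals sup over all probability measures H on [0,1] of R_F(s,H). In other words, the worst-case regrets under the partial-information and full-information benchmarks coincide. -/
open MeasureTheory ProbabilityTheory Set

noncomputable section

namespace FPA

/-- The unit interval `[0,1] ⊆ ℝ`. -/
def Iu : Set ℝ := Set.Icc 0 1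

/-- `μ` is a probability measure on `[0,1]`. -/
def IsProbOn (μ : Measure ℝ) : Prop := IsProbabilityMeasure μ ∧ μ Iu = 1

/-- A bidding strategy: a Markov kernel from `[0,1]` to `[0,1]`. -/
def IsStrategy (s : Kernel ℝ ℝ) : Prop := IsMarkovKernel s ∧ ∀ v : ℝ, s v Iu = 1

/-- The buyer's utility `u(b,h;v) = (v−b)·1{b ≥ h}`. -/
def util (b h v : ℝ) : ℝ := (v - b) * (if h ≤ b then 1 else 0)

/-- Expected utility `U_F(s,H)`. -/
def eUtil (F : Measure ℝ) (s : Kernel ℝ ℝ) (H : Measure ℝ) : ℝ :=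
  ∫ v, ∫ h, ∫ b, util b h v ∂(s v) ∂H ∂F

/-- Regret `Reg_F(s,H) = sup_{s'∈S} U_F(s',H) − U_F(s,H)`. -/
def regret (F : Measure ℝ) (s : Kernel ℝ ℝ) (H : Measure ℝ) : ℝ :=
  (⨆ s' : {k : Kernel ℝ ℝ // IsStrategy k}, eUtil F s'.1 H) - eUtil F s H

/-- Induced bid distribution `P_{s,F}`. -/
def bidDist (F : Measure ℝ) (s : Kernel ℝ ℝ) : Measure ℝ := F.bind (fun v => s v)

/-- CDF of a measure on `[0,1]`: `F(x) = F([0,x])`. -/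
def cdf01 (F : Measure ℝ) (x : ℝ) : ℝ := (F (Set.Iic x)).toReal

/-- Generalized inverse `F⁻(t) = inf {x ∈ [0,1] : F(x) ≥ t}`. -/
def qinv (F : Measure ℝ) (t : ℝ) : ℝ := sInf {x | x ∈ Iu ∧ t ≤ cdf01 F x}

/-- Full-information benchmark against a deterministic highest competing bid `h`. -/
def bench (F : Measure ℝ) (h : ℝ) : ℝ := ∫ v, (v - h) * (if h ≤ v then 1 else 0) ∂F

/-- Full-information regret `R_F(s,H)`. -/
def fregret (F : Measure ℝ) (s : Kernel ℝ ℝ) (H : Measure ℝ) : ℝ :=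
  (∫ h, bench F h ∂H) - eUtil F s H

/-- Absolute continuity of a function on `[0,1]` (FTC characterization). -/
def AbsContOn01 (f : ℝ → ℝ) : Prop :=
  ∃ g : ℝ → ℝ, IntervalIntegrable g volume 0 1 ∧
    ∀ x ∈ Iu, f x = f 0 + ∫ t in (0:ℝ)..x, g t

/-- The set of quantiles corresponding to value `v`: `Y(v) = {y ∈ [0,1] : F⁻(y) = v}`. -/
def Yset (F : Measure ℝ) (v : ℝ) : Set ℝ := {y | y ∈ Iu ∧ qinv F y = v}

/-- Uniform distribution on a set `A ⊆ ℝ`. -/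
def unifOn (A : Set ℝ) : Measure ℝ := (volume A)⁻¹ • volume.restrict A

/-- `s` is the bidding strategy corresponding to the quantile-based bidding strategy `Q`:
it bids `Q(F(v))` when `F({v}) = 0`, and the pushforward under `Q` of the uniform
distribution on `Y(v)` when `F({v}) > 0`. -/
def IsQuantileStrategy (F : Measure ℝ) (Q : ℝ → ℝ) (s : Kernel ℝ ℝ) : Prop :=
  IsStrategy s ∧ ∀ v ∈ Iu,
    s v = if F {v} = 0 then Measure.dirac (Q (cdf01 F v)) else (unifOn (Yset F v)).map Q

/-- The candidate worst-case highest-competing-bid CDF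
`H*(x) = exp(−∫_{(Q*)⁻¹(x)}^1 dt/(1−F(Q*(t))))`. -/
def Hstar (F : Measure ℝ) (Q : ℝ → ℝ) (x : ℝ) : ℝ :=
  Real.exp (-(∫ t in (Function.invFunOn Q Iu x)..(1:ℝ), 1 / (1 - cdf01 F (Q t))))


section Aux

open Function

lemma measIu : MeasurableSet Iu := measurableSet_Icc

lemma zero_mem_Iu : (0:ℝ) ∈ Iu := by constructor <;> norm_num

/-- benchmark integrand -/
def mf (v h : ℝ) : ℝ := (v - h) * (if h ≤ v then 1 else 0)

lemma bench_eq (F : Measure ℝ) (h : ℝ) : bench F h = ∫ v, mf v h ∂F := rfl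

lemma measurable_mf : Measurable (uncurry mf) := by
  apply Measurable.mul (by fun_prop)
  exact Measurable.ite (measurableSet_le measurable_snd measurable_fst)
    measurable_const measurable_const

lemma mf_abs_le {v h : ℝ} (hv : v ∈ Iu) (hh : h ∈ Iu) : |mf v h| ≤ 1 := by
  obtain ⟨hv0, hv1⟩ := hv; obtain ⟨hh0, hh1⟩ := hh
  unfold mf
  rcases le_or_gt h v with hle | hlt
  · rw [if_pos hle, mul_one, abs_le]; constructor <;> linarith
  · rw [if_neg (not_le.2 hlt), mul_zero]; norm_num

lemma util_le_mf (b h v : ℝ) : util b h v ≤ mf v h := by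
  unfold util mf
  rcases le_or_gt h b with hle | hlt
  · rw [if_pos hle, mul_one]
    rcases le_or_gt h v with hle2 | hlt2
    · rw [if_pos hle2, mul_one]; linarith
    · rw [if_neg (not_le.2 hlt2), mul_zero]; linarith
  · rw [if_neg (not_le.2 hlt), mul_zero]
    rcases le_or_gt h v with hle2 | hlt2
    · rw [if_pos hle2, mul_one]; linarith
    · rw [if_neg (not_le.2 hlt2), mul_zero]

lemma util_abs_le {b v : ℝ} (hb : b ∈ Iu) (hv : v ∈ Iu) (h : ℝ) : |util b h v| ≤ 1 := by
  obtain ⟨hb0, hb1⟩ := hb; obtain ⟨hv0, hv1⟩ := hv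
  unfold util
  rcases le_or_gt h b with hle | hlt
  · rw [if_pos hle, mul_one, abs_le]; constructor <;> linarith
  · rw [if_neg (not_le.2 hlt), mul_zero]; norm_num

lemma measurable_util3 : Measurable (fun p : (ℝ × ℝ) × ℝ => util p.2 p.1.2 p.1.1) := by
  apply Measurable.mul (by fun_prop)
  exact Measurable.ite (measurableSet_le (by fun_prop) (by fun_prop))
    measurable_const measurable_const

lemma measurable_util_b (h v : ℝ) : Measurable (fun b => util b h v) := by
  apply Measurable.mul (by fun_prop)
  exact Measurable.ite (measurableSet_le measurable_const measurable_id)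
    measurable_const measurable_const

lemma ae_mem_Iu {μ : Measure ℝ} [IsProbabilityMeasure μ] (hμ : μ Iu = 1) :
    ∀ᵐ x ∂μ, x ∈ Iu := by
  have h0 : μ Iuᶜ = 0 := by
    rw [measure_compl measIu (measure_ne_top _ _), hμ, measure_univ]; simp
  exact ae_iff.2 h0

end Aux

section Aux2

open Function

/-- inner expected utility given value `v` and competing bid `h`. -/
def gk (s : Kernel ℝ ℝ) (v h : ℝ) : ℝ := ∫ b, util b h v ∂(s v)

lemma gk_sm (s' : Kernel ℝ ℝ) [IsSFiniteKernel s'] :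
    StronglyMeasurable (uncurry (gk s')) := by
  have h := MeasureTheory.StronglyMeasurable.integral_kernel_prod_right
      (κ := s'.comap Prod.fst measurable_fst)
      (f := fun (p : ℝ × ℝ) b => util b p.2 p.1)
      measurable_util3.stronglyMeasurable
  simp only [Kernel.comap_apply] at h
  exact h

lemma gk_abs_le {s' : Kernel ℝ ℝ} (hs' : IsStrategy s') {v : ℝ} (hv : v ∈ Iu) (h : ℝ) :
    |gk s' v h| ≤ 1 := by
  haveI := hs'.1
  have hae : ∀ᵐ b ∂(s' v), b ∈ Iu := ae_mem_Iu (hs'.2 v)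
  have := norm_integral_le_of_norm_le (f := fun b => util b h v) (g := fun _ => (1:ℝ))
    (μ := s' v) (integrable_const 1)
    (hae.mono fun b hb => by simpa [Real.norm_eq_abs] using util_abs_le hb hv h)
  simpa [Real.norm_eq_abs, gk] using this

lemma util_integrable {s' : Kernel ℝ ℝ} (hs' : IsStrategy s') (v h : ℝ) :
    Integrable (fun b => util b h v) (s' v) := by
  haveI := hs'.1
  have hae : ∀ᵐ b ∂(s' v), b ∈ Iu := ae_mem_Iu (hs'.2 v)
  refine Integrable.mono' (integrable_const (|v| + 1))
    (measurable_util_b h v).aestronglyMeasurable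
    (hae.mono fun b hb => ?_)
  rw [Real.norm_eq_abs]
  unfold util
  rcases le_or_gt h b with hle | hlt
  · rw [if_pos hle, mul_one]
    have : |v - b| ≤ |v| + |b| := abs_sub v b
    have hb1 : |b| ≤ 1 := abs_le.2 ⟨by linarith [hb.1], hb.2⟩
    linarith
  · rw [if_neg (not_le.2 hlt), mul_zero, abs_zero]; positivity

lemma gk_le_mf {s' : Kernel ℝ ℝ} (hs' : IsStrategy s') (v h : ℝ) :
    gk s' v h ≤ mf v h := by
  haveI := hs'.1
  calc gk s' v h ≤ ∫ _, mf v h ∂(s' v) :=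
        integral_mono (util_integrable hs' v h) (integrable_const _)
          (fun b => util_le_mf b h v)
    _ = mf v h := by simp

lemma ae_prod_mem {F H : Measure ℝ} (hF : IsProbOn F) (hH : IsProbOn H) :
    ∀ᵐ p : ℝ × ℝ ∂(F.prod H), p.1 ∈ Iu ∧ p.2 ∈ Iu := by
  haveI := hF.1; haveI := hH.1
  have hF0 : F Iuᶜ = 0 := by
    rw [measure_compl measIu (measure_ne_top _ _), hF.2, measure_univ]; simp
  have hH0 : H Iuᶜ = 0 := by
    rw [measure_compl measIu (measure_ne_top _ _), hH.2, measure_univ]; simp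
  have h1 : (F.prod H) {p : ℝ × ℝ | p.1 ∉ Iu} = 0 := by
    have he : {p : ℝ × ℝ | p.1 ∉ Iu} = Iuᶜ ×ˢ (Set.univ : Set ℝ) := by
      ext p; simp
    rw [he, Measure.prod_prod, hF0, zero_mul]
  have h2 : (F.prod H) {p : ℝ × ℝ | p.2 ∉ Iu} = 0 := by
    have he : {p : ℝ × ℝ | p.2 ∉ Iu} = (Set.univ : Set ℝ) ×ˢ Iuᶜ := by
      ext p; simp
    rw [he, Measure.prod_prod, hH0, mul_zero]
  exact (ae_iff.2 (by simpa using h1)).and (ae_iff.2 (by simpa using h2))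

lemma swap_int {F H : Measure ℝ} (hF : IsProbOn F) (hH : IsProbOn H)
    {f : ℝ → ℝ → ℝ} (hm : StronglyMeasurable (uncurry f))
    (hb : ∀ᵐ p : ℝ × ℝ ∂(F.prod H), |f p.1 p.2| ≤ 1) :
    ∫ v, ∫ h, f v h ∂H ∂F = ∫ h, ∫ v, f v h ∂F ∂H := by
  haveI := hF.1; haveI := hH.1
  exact integral_integral_swap (Integrable.mono' (integrable_const 1)
    hm.aestronglyMeasurable (hb.mono fun p hp => by simpa [Real.norm_eq_abs, uncurry] using hp))

end Aux2

section Aux3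

open Function

lemma util_abs_le' {b : ℝ} (hb : b ∈ Iu) (h v : ℝ) : |util b h v| ≤ |v| + 1 := by
  unfold util
  rcases le_or_gt h b with hle | hlt
  · rw [if_pos hle, mul_one]
    have h1 : |v - b| ≤ |v| + |b| := abs_sub v b
    have hb1 : |b| ≤ 1 := abs_le.2 ⟨by linarith [hb.1], hb.2⟩
    linarith
  · rw [if_neg (not_le.2 hlt), mul_zero, abs_zero]; positivity

lemma mf_abs_le' {h : ℝ} (hh : h ∈ Iu) (v : ℝ) : |mf v h| ≤ |v| + 1 := by
  unfold mf
  rcases le_or_gt h v with hle | hlt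
  · rw [if_pos hle, mul_one]
    have h1 : |v - h| ≤ |v| + |h| := abs_sub v h
    have hh1 : |h| ≤ 1 := abs_le.2 ⟨by linarith [hh.1], hh.2⟩
    linarith
  · rw [if_neg (not_le.2 hlt), mul_zero, abs_zero]; positivity

lemma gk_abs_le' {s' : Kernel ℝ ℝ} (hs' : IsStrategy s') (v h : ℝ) :
    |gk s' v h| ≤ |v| + 1 := by
  haveI := hs'.1
  have hae : ∀ᵐ b ∂(s' v), b ∈ Iu := ae_mem_Iu (hs'.2 v)
  have := norm_integral_le_of_norm_le (f := fun b => util b h v) (g := fun _ => |v| + 1)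
    (μ := s' v) (integrable_const _)
    (hae.mono fun b hb => by simpa [Real.norm_eq_abs] using util_abs_le' hb h v)
  simpa [Real.norm_eq_abs, gk] using this

lemma eUtil_eq (F : Measure ℝ) (s : Kernel ℝ ℝ) (H : Measure ℝ) :
    eUtil F s H = ∫ v, ∫ h, gk s v h ∂H ∂F := rfl

lemma eUtil_dirac (F : Measure ℝ) (s : Kernel ℝ ℝ) (h : ℝ) :
    eUtil F s (Measure.dirac h) = ∫ v, gk s v h ∂F := by
  unfold eUtil
  simp only [integral_dirac]
  rfl

lemma sm_int_gk (F : Measure ℝ) [SFinite F] (s : Kernel ℝ ℝ) [IsSFiniteKernel s] :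
    StronglyMeasurable (fun h => ∫ v, gk s v h ∂F) := by
  have h1 : StronglyMeasurable (fun p : ℝ × ℝ => gk s p.2 p.1) :=
    (gk_sm s).comp_measurable measurable_swap
  exact h1.integral_prod_right'

lemma sm_bench (F : Measure ℝ) [SFinite F] : StronglyMeasurable (bench F) := by
  have h1 : StronglyMeasurable (fun p : ℝ × ℝ => mf p.2 p.1) :=
    ((measurable_mf.comp measurable_swap)).stronglyMeasurable
  have h2 := h1.integral_prod_right' (ν := F)
  have he : bench F = fun h => ∫ v, mf v h ∂F := funext (bench_eq F)
  rw [he]; exact h2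

lemma bench_abs_le {F : Measure ℝ} (hF : IsProbOn F) {h : ℝ} (hh : h ∈ Iu) :
    |bench F h| ≤ 1 := by
  haveI := hF.1
  have hae := ae_mem_Iu hF.2
  have h1 := norm_integral_le_of_norm_le (f := fun v => mf v h) (g := fun _ => (1:ℝ))
    (μ := F) (integrable_const 1)
    (hae.mono fun v hv => by simpa [Real.norm_eq_abs] using mf_abs_le hv hh)
  rw [bench_eq, ← Real.norm_eq_abs]
  simpa using h1

lemma int_gk_abs_le {F : Measure ℝ} (hF : IsProbOn F) {s : Kernel ℝ ℝ}
    (hs : IsStrategy s) (h : ℝ) : |∫ v, gk s v h ∂F| ≤ 1 := by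
  haveI := hF.1
  have hae := ae_mem_Iu hF.2
  have h1 := norm_integral_le_of_norm_le (f := fun v => gk s v h) (g := fun _ => (1:ℝ))
    (μ := F) (integrable_const 1)
    (hae.mono fun v hv => by simpa [Real.norm_eq_abs] using gk_abs_le hs hv h)
  rw [← Real.norm_eq_abs]
  simpa using h1

lemma eUtil_swap {F H : Measure ℝ} (hF : IsProbOn F) (hH : IsProbOn H)
    {s : Kernel ℝ ℝ} (hs : IsStrategy s) :
    eUtil F s H = ∫ h, eUtil F s (Measure.dirac h) ∂H := by
  haveI := hs.1
  rw [eUtil_eq, swap_int hF hH (gk_sm s)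
    ((ae_prod_mem hF hH).mono fun p hp => gk_abs_le hs hp.1 p.2)]
  simp only [eUtil_dirac]

lemma integrable_bench {F H : Measure ℝ} (hF : IsProbOn F) (hH : IsProbOn H) :
    Integrable (bench F) H := by
  haveI := hF.1; haveI := hH.1
  refine Integrable.mono' (integrable_const 1) (sm_bench F).aestronglyMeasurable
    ((ae_mem_Iu hH.2).mono fun h hh => ?_)
  rw [Real.norm_eq_abs]; exact bench_abs_le hF hh

lemma integrable_eUtil_dirac {F H : Measure ℝ} (hF : IsProbOn F) (hH : IsProbOn H)
    {s : Kernel ℝ ℝ} (hs : IsStrategy s) :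
    Integrable (fun h => eUtil F s (Measure.dirac h)) H := by
  haveI := hF.1; haveI := hH.1; haveI := hs.1
  have he : (fun h : ℝ => eUtil F s (Measure.dirac h)) = fun h => ∫ v, gk s v h ∂F :=
    funext fun h => eUtil_dirac F s h
  rw [he]
  refine Integrable.mono' (integrable_const 1) (sm_int_gk F s).aestronglyMeasurable
    (Filter.Eventually.of_forall fun h => ?_)
  rw [Real.norm_eq_abs]; exact int_gk_abs_le hF hs h

lemma eUtil_le_benchInt {F H : Measure ℝ} (hF : IsProbOn F) (hH : IsProbOn H)
    {s' : Kernel ℝ ℝ} (hs' : IsStrategy s') :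
    eUtil F s' H ≤ ∫ h, bench F h ∂H := by
  haveI := hF.1; haveI := hH.1; haveI := hs'.1
  have step2 : ∀ v : ℝ, ∫ h, gk s' v h ∂H ≤ ∫ h, mf v h ∂H := by
    intro v
    refine integral_mono ?_ ?_ (fun h => gk_le_mf hs' v h)
    · refine Integrable.mono' (integrable_const (|v| + 1))
        (((gk_sm s').comp_measurable measurable_prodMk_left).aestronglyMeasurable)
        (Filter.Eventually.of_forall fun h => ?_)
      rw [Real.norm_eq_abs]; exact gk_abs_le' hs' v h
    · refine Integrable.mono' (integrable_const (|v| + 1))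
        ((measurable_mf.comp measurable_prodMk_left).aestronglyMeasurable)
        ((ae_mem_Iu hH.2).mono fun h hh => ?_)
      rw [Real.norm_eq_abs]; exact mf_abs_le' hh v
  have int1 : Integrable (fun v => ∫ h, gk s' v h ∂H) F := by
    refine Integrable.mono' (integrable_const 1)
      ((gk_sm s').integral_prod_right'.aestronglyMeasurable)
      ((ae_mem_Iu hF.2).mono fun v hv => ?_)
    rw [Real.norm_eq_abs, ← Real.norm_eq_abs]
    have := norm_integral_le_of_norm_le (f := fun h => gk s' v h) (g := fun _ => (1:ℝ))
      (μ := H) (integrable_const 1)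
      (Filter.Eventually.of_forall fun h => by
        simpa [Real.norm_eq_abs] using gk_abs_le hs' hv h)
    simpa using this
  have int2 : Integrable (fun v => ∫ h, mf v h ∂H) F := by
    refine Integrable.mono' (integrable_const 1)
      (measurable_mf.stronglyMeasurable.integral_prod_right'.aestronglyMeasurable)
      ((ae_mem_Iu hF.2).mono fun v hv => ?_)
    have := norm_integral_le_of_norm_le (f := fun h => mf v h) (g := fun _ => (1:ℝ))
      (μ := H) (integrable_const 1)
      ((ae_mem_Iu hH.2).mono fun h hh => by
        simpa [Real.norm_eq_abs] using mf_abs_le hv hh)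
    simpa using this
  have step4 : ∫ v, ∫ h, mf v h ∂H ∂F = ∫ h, bench F h ∂H := by
    rw [swap_int hF hH measurable_mf.stronglyMeasurable
      ((ae_prod_mem hF hH).mono fun p hp => mf_abs_le hp.1 hp.2)]
    simp only [← bench_eq]
  calc eUtil F s' H = ∫ v, ∫ h, gk s' v h ∂H ∂F := eUtil_eq F s' H
    _ ≤ ∫ v, ∫ h, mf v h ∂H ∂F := integral_mono int1 int2 step2
    _ = ∫ h, bench F h ∂H := step4

lemma eUtil_abs_le {F H : Measure ℝ} (hF : IsProbOn F) (hH : IsProbOn H)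
    {s : Kernel ℝ ℝ} (hs : IsStrategy s) : |eUtil F s H| ≤ 1 := by
  haveI := hF.1; haveI := hH.1
  rw [eUtil_eq, ← Real.norm_eq_abs]
  have h1 := norm_integral_le_of_norm_le (f := fun v => ∫ h, gk s v h ∂H)
    (g := fun _ => (1:ℝ)) (μ := F) (integrable_const 1)
    ((ae_mem_Iu hF.2).mono fun v hv => ?_)
  · simpa using h1
  · have := norm_integral_le_of_norm_le (f := fun h => gk s v h) (g := fun _ => (1:ℝ))
      (μ := H) (integrable_const 1)
      (Filter.Eventually.of_forall fun h => by
        simpa [Real.norm_eq_abs] using gk_abs_le hs hv h)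
    simpa using this

lemma intBench_abs_le {F H : Measure ℝ} (hF : IsProbOn F) (hH : IsProbOn H) :
    |∫ h, bench F h ∂H| ≤ 1 := by
  haveI := hF.1; haveI := hH.1
  rw [← Real.norm_eq_abs]
  have h1 := norm_integral_le_of_norm_le (f := bench F) (g := fun _ => (1:ℝ))
    (μ := H) (integrable_const 1)
    ((ae_mem_Iu hH.2).mono fun h hh => by
      simpa [Real.norm_eq_abs] using bench_abs_le hF hh)
  simpa using h1

end Aux3

section Aux4

open Function

lemma measurable_optQ (h : ℝ) : Measurable (fun v : ℝ => if h ≤ v then h else 0) :=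
  Measurable.ite measurableSet_Ici measurable_const measurable_const

/-- the optimal strategy against a fixed competing bid `h`. -/
def optK (h : ℝ) : Kernel ℝ ℝ := Kernel.deterministic _ (measurable_optQ h)

lemma optK_strategy {h : ℝ} (hh : h ∈ Iu) : IsStrategy (optK h) := by
  constructor
  · exact Kernel.isMarkovKernel_deterministic _
  · intro v
    rw [optK, Kernel.deterministic_apply]
    apply Measure.dirac_apply_of_mem
    split_ifs
    · exact hh
    · exact zero_mem_Iu

lemma eUtil_optK {F : Measure ℝ} (hF : IsProbOn F) {h : ℝ} (hh : h ∈ Iu) :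
    eUtil F (optK h) (Measure.dirac h) = bench F h := by
  haveI := hF.1
  unfold eUtil optK
  simp only [Kernel.deterministic_apply, integral_dirac]
  rw [bench_eq]
  refine integral_congr_ae ((ae_mem_Iu hF.2).mono fun v hv => ?_)
  by_cases hle : h ≤ v
  · simp [util, mf, hle]
  · have hv0 : (0:ℝ) ≤ v := hv.1
    have hn : ¬ h ≤ 0 := fun hc => hle (hc.trans hv0)
    simp [util, mf, hle, hn]

instance : Nonempty {k : Kernel ℝ ℝ // IsStrategy k} :=
  ⟨⟨optK 0, optK_strategy zero_mem_Iu⟩⟩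

lemma probOn_dirac {h : ℝ} (hh : h ∈ Iu) : IsProbOn (Measure.dirac h) :=
  ⟨inferInstance, Measure.dirac_apply_of_mem hh⟩

lemma sup_eUtil_dirac {F : Measure ℝ} (hF : IsProbOn F) {h : ℝ} (hh : h ∈ Iu) :
    (⨆ s' : {k : Kernel ℝ ℝ // IsStrategy k}, eUtil F s'.1 (Measure.dirac h))
      = bench F h := by
  have hub : ∀ s' : {k : Kernel ℝ ℝ // IsStrategy k},
      eUtil F s'.1 (Measure.dirac h) ≤ bench F h := by
    intro s'
    have h1 := eUtil_le_benchInt hF (probOn_dirac hh) s'.2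
    rwa [integral_dirac] at h1
  refine le_antisymm (ciSup_le hub) ?_
  have h2 := le_ciSup (f := fun s' : {k : Kernel ℝ ℝ // IsStrategy k} =>
      eUtil F s'.1 (Measure.dirac h))
    ⟨bench F h, by rintro y ⟨s', rfl⟩; exact hub s'⟩
    (⟨optK h, optK_strategy hh⟩ : {k : Kernel ℝ ℝ // IsStrategy k})
  rwa [eUtil_optK hF hh] at h2

lemma regret_dirac {F : Measure ℝ} (hF : IsProbOn F) (s : Kernel ℝ ℝ) {h : ℝ}
    (hh : h ∈ Iu) :
    regret F s (Measure.dirac h) = fregret F s (Measure.dirac h) := by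
  unfold regret fregret
  rw [sup_eUtil_dirac hF hh, integral_dirac]

lemma fregret_int {F H : Measure ℝ} (hF : IsProbOn F) (hH : IsProbOn H)
    {s : Kernel ℝ ℝ} (hs : IsStrategy s) :
    fregret F s H = ∫ h, fregret F s (Measure.dirac h) ∂H := by
  unfold fregret
  rw [eUtil_swap hF hH hs,
    ← integral_sub (integrable_bench hF hH) (integrable_eUtil_dirac hF hH hs)]
  refine integral_congr_ae (Filter.Eventually.of_forall fun h => ?_)
  simp only [integral_dirac]

lemma fregret_dirac_le {F : Measure ℝ} (hF : IsProbOn F) {s : Kernel ℝ ℝ}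
    (hs : IsStrategy s) {h : ℝ} (hh : h ∈ Iu) :
    fregret F s (Measure.dirac h) ≤ 2 := by
  unfold fregret
  rw [integral_dirac, eUtil_dirac]
  have h1 := (abs_le.1 (bench_abs_le hF hh)).2
  have h2 := (abs_le.1 (int_gk_abs_le hF hs h)).1
  linarith

lemma fregret_le_two {F H : Measure ℝ} (hF : IsProbOn F) (hH : IsProbOn H)
    {s : Kernel ℝ ℝ} (hs : IsStrategy s) : fregret F s H ≤ 2 := by
  unfold fregret
  have h1 := (abs_le.1 (intBench_abs_le hF hH)).2
  have h2 := (abs_le.1 (eUtil_abs_le hF hH hs)).1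
  linarith

lemma regret_le_fregret {F H : Measure ℝ} (hF : IsProbOn F) (hH : IsProbOn H)
    {s : Kernel ℝ ℝ} (hs : IsStrategy s) :
    regret F s H ≤ fregret F s H :=
  sub_le_sub_right (ciSup_le fun s' => eUtil_le_benchInt hF hH s'.2) _

lemma fregret_le_B {F : Measure ℝ} (hF : IsProbOn F) {s : Kernel ℝ ℝ}
    (hs : IsStrategy s) {H : Measure ℝ} (hH : IsProbOn H) :
    fregret F s H ≤ ⨆ h : Iu, fregret F s (Measure.dirac (h : ℝ)) := by
  haveI := hH.1
  have hbdd : BddAbove (Set.range fun h : Iu => fregret F s (Measure.dirac (h:ℝ))) :=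
    ⟨2, by rintro y ⟨h, rfl⟩; exact fregret_dirac_le hF hs h.2⟩
  have hint : Integrable (fun h => fregret F s (Measure.dirac h)) H := by
    have he : (fun h : ℝ => fregret F s (Measure.dirac h))
        = fun h => bench F h - eUtil F s (Measure.dirac h) := by
      funext h; unfold fregret; rw [integral_dirac]
    rw [he]
    exact (integrable_bench hF hH).sub (integrable_eUtil_dirac hF hH hs)
  rw [fregret_int hF hH hs]
  calc ∫ h, fregret F s (Measure.dirac h) ∂H
      ≤ ∫ _, (⨆ h : Iu, fregret F s (Measure.dirac (h : ℝ))) ∂H :=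
        integral_mono_ae hint (integrable_const _)
          ((ae_mem_Iu hH.2).mono fun h hh => le_ciSup hbdd (⟨h, hh⟩ : Iu))
    _ = ⨆ h : Iu, fregret F s (Measure.dirac (h : ℝ)) := by simp

end Aux4

/-- Corollary: full-information benchmark: for any value distribution `F`
on `[0,1]` and any strategy `s` with absolutely continuous induced bid distribution, the
worst-case partial-information regret equals the worst-case full-information regret over
deterministic bids, which equals the worst-case full-information regret over all `H`. -/
theorem full_info_reduction
    (F : Measure ℝ) (hF : IsProbOn F) (s : Kernel ℝ ℝ) (hs : IsStrategy s)
    (hac : bidDist F s ≪ volume) :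
    (⨆ H : {H : Measure ℝ // IsProbOn H}, regret F s H.1)
        = (⨆ h : Iu, fregret F s (Measure.dirac (h : ℝ)))
      ∧ (⨆ h : Iu, fregret F s (Measure.dirac (h : ℝ)))
        = ⨆ H : {H : Measure ℝ // IsProbOn H}, fregret F s H.1 := by
  haveI := hF.1
  haveI : Nonempty {H : Measure ℝ // IsProbOn H} :=
    ⟨⟨Measure.dirac 0, probOn_dirac zero_mem_Iu⟩⟩
  haveI : Nonempty ↥Iu := ⟨⟨0, zero_mem_Iu⟩⟩
  have hAbdd : BddAbove (Set.range fun H : {H : Measure ℝ // IsProbOn H} =>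
      regret F s H.1) := by
    refine ⟨2, ?_⟩
    rintro y ⟨H, rfl⟩
    exact (regret_le_fregret hF H.2 hs).trans (fregret_le_two hF H.2 hs)
  have hCbdd : BddAbove (Set.range fun H : {H : Measure ℝ // IsProbOn H} =>
      fregret F s H.1) := by
    refine ⟨2, ?_⟩
    rintro y ⟨H, rfl⟩
    exact fregret_le_two hF H.2 hs
  have hAC : (⨆ H : {H : Measure ℝ // IsProbOn H}, regret F s H.1)
      ≤ ⨆ H : {H : Measure ℝ // IsProbOn H}, fregret F s H.1 :=
    ciSup_mono hCbdd fun H => regret_le_fregret hF H.2 hs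
  have hCB : (⨆ H : {H : Measure ℝ // IsProbOn H}, fregret F s H.1)
      ≤ ⨆ h : Iu, fregret F s (Measure.dirac (h : ℝ)) :=
    ciSup_le fun H => fregret_le_B hF hs H.2
  have hBA : (⨆ h : Iu, fregret F s (Measure.dirac (h : ℝ)))
      ≤ ⨆ H : {H : Measure ℝ // IsProbOn H}, regret F s H.1 := by
    refine ciSup_le fun h => ?_
    rw [← regret_dirac hF s h.2]
    exact le_ciSup hAbdd
      (⟨Measure.dirac (h : ℝ), probOn_dirac h.2⟩ : {H : Measure ℝ // IsProbOn H})
  have hBC : (⨆ h : Iu, fregret F s (Measure.dirac (h : ℝ)))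
      ≤ ⨆ H : {H : Measure ℝ // IsProbOn H}, fregret F s H.1 := by
    refine ciSup_le fun h => ?_
    exact le_ciSup hCbdd
      (⟨Measure.dirac (h : ℝ), probOn_dirac h.2⟩ : {H : Measure ℝ // IsProbOn H})
  exact ⟨le_antisymm (hAC.trans hCB) hBA, le_antisymm hBC hCB⟩

end FPA
end
end

section
/- Let F be a probability measure on [0,1] with F({0}) = 0, let Q* be an absolutely continuous strictly increasing function on [0,1] with Q*(0) = 0, 0 < Q*(y) < F⁻(y) for all y in (0,1], and (Q*)'(y) = (F⁻(y) − Q*(y)) / (1 − F(Q*(y))) a.e., and let H* be the probability distribution on [0, Q*(1)] with CDF H*(x) = exp( −∫_{(Q*)^{-1}(x)}^1 1/(1 − F(Q*(t))) dt ). Then for every value v in [0,1], every bid of the form Q*(y) with y in [0,1] and F⁻(y) = v maximizes the expected utility b ↦ u(b | v, H*) = (v − b) · H*(b) over b in [0,1]. -/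
open MeasureTheory ProbabilityTheory Set

noncomputable section

namespace FPA

/-- The CDF of the candidate distribution `H*`, extended to all bids: it equals `1` for
bids at or above `Q*(1)` and `exp(−∫_{(Q*)⁻¹(x)}^1 dt/(1 − F(Q*(t))))` below. -/
def HstarCDF (F : Measure ℝ) (Q : ℝ → ℝ) (x : ℝ) : ℝ :=
  if Q 1 ≤ x then 1 else Hstar F Q x

section Aux

lemma cdf01_nonneg (F : Measure ℝ) (x : ℝ) : 0 ≤ cdf01 F x := ENNReal.toReal_nonneg

lemma cdf01_mono {F : Measure ℝ} (hF : IsProbOn F) : Monotone (cdf01 F) := by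
  haveI := hF.1
  intro x y hxy
  exact ENNReal.toReal_mono (measure_ne_top _ _) (measure_mono (Set.Iic_subset_Iic.2 hxy))

lemma cdf01_le_one {F : Measure ℝ} (hF : IsProbOn F) (x : ℝ) : cdf01 F x ≤ 1 := by
  haveI := hF.1
  have : F (Set.Iic x) ≤ 1 := prob_le_one
  simpa [cdf01] using ENNReal.toReal_mono (by simp) this

lemma cdf01_one {F : Measure ℝ} (hF : IsProbOn F) : cdf01 F 1 = 1 := by
  haveI := hF.1
  have h1 : F (Set.Iic 1) ≤ 1 := prob_le_one
  have h2 : (1 : ENNReal) ≤ F (Set.Iic 1) := by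
    rw [← hF.2]; exact measure_mono (fun x hx => hx.2)
  have : F (Set.Iic 1) = 1 := le_antisymm h1 h2
  simp [cdf01, this]

lemma qinv_set_nonempty {F : Measure ℝ} (hF : IsProbOn F) {t : ℝ} (ht : t ≤ 1) :
    ({x | x ∈ Iu ∧ t ≤ cdf01 F x}).Nonempty :=
  ⟨1, ⟨by norm_num [Iu], by rw [cdf01_one hF]; exact ht⟩⟩

lemma qinv_set_bddBelow (F : Measure ℝ) (t : ℝ) :
    BddBelow {x | x ∈ Iu ∧ t ≤ cdf01 F x} := ⟨0, fun x hx => hx.1.1⟩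

lemma qinv_nonneg (F : Measure ℝ) {t : ℝ} (hF : IsProbOn F) (ht : t ≤ 1) : 0 ≤ qinv F t :=
  le_csInf (qinv_set_nonempty hF ht) (fun x hx => hx.1.1)

lemma qinv_le_one (F : Measure ℝ) {t : ℝ} (hF : IsProbOn F) (ht : t ≤ 1) : qinv F t ≤ 1 :=
  csInf_le (qinv_set_bddBelow F t) ⟨by norm_num [Iu], by rw [cdf01_one hF]; exact ht⟩

lemma qinv_zero {F : Measure ℝ} (hF : IsProbOn F) : qinv F 0 = 0 := by
  refine le_antisymm (csInf_le (qinv_set_bddBelow F 0) ?_) (qinv_nonneg F hF (by norm_num))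
  exact ⟨by norm_num [Iu], cdf01_nonneg F 0⟩

lemma qinv_mono {F : Measure ℝ} (hF : IsProbOn F) {s t : ℝ} (hst : s ≤ t) (ht : t ≤ 1) :
    qinv F s ≤ qinv F t :=
  csInf_le_csInf (qinv_set_bddBelow F s) (qinv_set_nonempty hF ht)
    (fun x hx => ⟨hx.1, le_trans hst hx.2⟩)

lemma qinv_le_of_mem {F : Measure ℝ} {t x : ℝ} (hx : x ∈ Iu) (hcx : t ≤ cdf01 F x) :
    qinv F t ≤ x := csInf_le (qinv_set_bddBelow F t) ⟨hx, hcx⟩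

end Aux
section Partition

open intervalIntegral in
lemma log_core_le {a w : ℝ → ℝ} {c d : ℝ} (hcd : c ≤ d)
    (ha_cont : ContinuousOn a (Set.Icc c d))
    {m : ℝ} (hm : 0 < m) (ham : ∀ u ∈ Set.Icc c d, m ≤ a u)
    (hw0 : ∀ u ∈ Set.Icc c d, 0 ≤ w u)
    (hwint : IntervalIntegrable w volume c d)
    (hkey : ∀ s s', c ≤ s → s ≤ s' → s' ≤ d → a s - a s' ≤ a s * ∫ u in s..s', w u) :
    Real.log (a c) - Real.log (a d) ≤ ∫ u in c..d, w u := by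
  have hwsub : ∀ {s s' : ℝ}, c ≤ s → s ≤ s' → s' ≤ d → IntervalIntegrable w volume s s' := by
    intro s s' hs hss' hs'd
    exact hwint.mono_set (by rw [Set.uIcc_of_le hss', Set.uIcc_of_le hcd]
                             exact Set.Icc_subset_Icc hs hs'd)
  set I := ∫ u in c..d, w u with hI
  have hI0 : 0 ≤ I := intervalIntegral.integral_nonneg hcd hw0
  set L := Real.log (a c) - Real.log (a d) with hL
  suffices H : ∀ ε : ℝ, 0 < ε → L ≤ (1 + ε) * I by
    by_contra hcon
    push_neg at hcon
    have hε : 0 < (L - I) / (2 * (I + 1)) := by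
      apply div_pos (by linarith) (by linarith)
    have := H _ hε
    have h2 : (1 + (L - I) / (2 * (I + 1))) * I = I + (L - I) * (I / (2 * (I + 1))) := by
      field_simp
    have h3 : I / (2 * (I + 1)) ≤ 1 / 2 := by
      rw [div_le_div_iff₀ (by linarith) (by norm_num)]; linarith
    nlinarith
  intro ε hε
  -- uniform continuity
  obtain ⟨δ, hδ, hδ'⟩ := Metric.uniformContinuousOn_iff.1
    ((isCompact_Icc).uniformContinuousOn_of_continuous ha_cont) (ε * m) (by positivity)
  obtain ⟨n, hn⟩ := exists_nat_gt ((d - c) / δ)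
  set N : ℕ := n + 1 with hNdef
  have hNpos : (0:ℝ) < N := by positivity
  have hstep_lt : (d - c) / N < δ := by
    rw [div_lt_iff₀ hNpos]
    have h1 : (d - c) / δ < N := lt_of_lt_of_le hn (by exact_mod_cast Nat.le_succ n)
    have h2 : (d - c) / δ * δ < ↑N * δ := mul_lt_mul_of_pos_right h1 hδ
    rw [div_mul_cancel₀ _ hδ.ne'] at h2
    linarith
  have hstep0 : 0 ≤ (d - c) / N := div_nonneg (by linarith) hNpos.le
  set p : ℕ → ℝ := fun i => c + i * ((d - c) / N) with hp
  have hp0 : p 0 = c := by simp [hp]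
  have hpN : p N = d := by simp only [hp]; rw [show (N:ℝ) * ((d - c) / N) = d - c by field_simp]; ring
  have hpmem : ∀ i : ℕ, i ≤ N → p i ∈ Set.Icc c d := by
    intro i hi
    constructor
    · simp only [hp]; nlinarith [Nat.cast_nonneg (α := ℝ) i]
    · have hi' : (i : ℝ) ≤ N := by exact_mod_cast hi
      have h1 : (i:ℝ) * ((d - c) / N) ≤ (N:ℝ) * ((d - c) / N) :=
        mul_le_mul_of_nonneg_right hi' hstep0
      have h2 : (N:ℝ) * ((d - c) / N) = d - c := by field_simp
      simp only [hp]
      linarith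
  have hpsucc : ∀ i : ℕ, p (i + 1) - p i = (d - c) / N := by
    intro i; simp only [hp]; push_cast; ring
  clear_value p
  have hple : ∀ i : ℕ, p i ≤ p (i + 1) := by
    intro i
    have := hpsucc i
    linarith [hstep0, this]
  set W : ℝ → ℝ := fun x => ∫ u in c..x, w u with hW
  have hWdiff : ∀ i : ℕ, i + 1 ≤ N →
      W (p (i+1)) - W (p i) = ∫ u in (p i)..(p (i+1)), w u := by
    intro i hi
    exact integral_interval_sub_left
      (hwsub le_rfl (hpmem _ hi).1 (hpmem _ hi).2)
      (hwsub le_rfl (hpmem i (by omega)).1 (hpmem i (by omega)).2)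
  have hsum1 : ∑ i ∈ Finset.range N, (W (p (i+1)) - W (p i)) = I := by
    have := Finset.sum_range_sub (fun i => W (p i)) N
    rw [this, hp0, hpN]
    simp [hW, hI]
  have hsum2 : L = ∑ i ∈ Finset.range N, (Real.log (a (p i)) - Real.log (a (p (i+1)))) := by
    rw [Finset.sum_range_sub' (fun i => Real.log (a (p i))) N, hp0, hpN]
  have hterm : ∀ i ∈ Finset.range N,
      Real.log (a (p i)) - Real.log (a (p (i+1))) ≤ (1 + ε) * (W (p (i+1)) - W (p i)) := by
    intro i hi
    rw [Finset.mem_range] at hi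
    have hi1 : i + 1 ≤ N := hi
    have hmi : p i ∈ Set.Icc c d := hpmem i (by omega)
    have hmi1 : p (i+1) ∈ Set.Icc c d := hpmem (i+1) hi1
    have hii1 : p i ≤ p (i+1) := hple i
    have hai : 0 < a (p i) := lt_of_lt_of_le hm (ham _ hmi)
    have hai1 : 0 < a (p (i+1)) := lt_of_lt_of_le hm (ham _ hmi1)
    have hdist : dist (p i) (p (i+1)) < δ := by
      rw [Real.dist_eq, abs_sub_comm, abs_of_nonneg (by linarith [hple i])]
      rw [hpsucc i]; exact hstep_lt
    have hclose := hδ' _ hmi _ hmi1 hdist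
    rw [Real.dist_eq] at hclose
    have hratio : a (p i) ≤ (1 + ε) * a (p (i+1)) := by
      have h1 : a (p i) - a (p (i+1)) ≤ ε * m := le_of_lt (lt_of_le_of_lt (le_abs_self _) hclose)
      have h2 : m ≤ a (p (i+1)) := ham _ hmi1
      nlinarith
    have hΔ0 : 0 ≤ W (p (i+1)) - W (p i) := by
      rw [hWdiff i hi1]
      exact intervalIntegral.integral_nonneg hii1
        (fun u hu => hw0 u ⟨le_trans hmi.1 hu.1, le_trans hu.2 hmi1.2⟩)
    have hkey_i : a (p i) - a (p (i+1)) ≤ a (p i) * (W (p (i+1)) - W (p i)) := by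
      rw [hWdiff i hi1]
      exact hkey _ _ hmi.1 hii1 hmi1.2
    have hlog : Real.log (a (p i)) - Real.log (a (p (i+1)))
        ≤ (a (p i) - a (p (i+1))) / a (p (i+1)) := by
      rw [← Real.log_div hai.ne' hai1.ne']
      have := Real.log_le_sub_one_of_pos (div_pos hai hai1)
      calc Real.log (a (p i) / a (p (i+1))) ≤ a (p i) / a (p (i+1)) - 1 := this
      _ = (a (p i) - a (p (i+1))) / a (p (i+1)) := by field_simp
    calc Real.log (a (p i)) - Real.log (a (p (i+1)))
        ≤ (a (p i) - a (p (i+1))) / a (p (i+1)) := hlog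
    _ ≤ (1 + ε) * (W (p (i+1)) - W (p i)) := by
        rw [div_le_iff₀ hai1]
        nlinarith [hkey_i, mul_le_mul_of_nonneg_right hratio hΔ0]
  calc L = ∑ i ∈ Finset.range N, (Real.log (a (p i)) - Real.log (a (p (i+1)))) := hsum2
  _ ≤ ∑ i ∈ Finset.range N, (1 + ε) * (W (p (i+1)) - W (p i)) := Finset.sum_le_sum hterm
  _ = (1 + ε) * ∑ i ∈ Finset.range N, (W (p (i+1)) - W (p i)) := by
      rw [Finset.mul_sum]
  _ = (1 + ε) * I := by rw [hsum1]

end Partition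
open intervalIntegral in
lemma log_core_ge {a w : ℝ → ℝ} {c d : ℝ} (hcd : c ≤ d)
    (ha_cont : ContinuousOn a (Set.Icc c d))
    {m : ℝ} (hm : 0 < m) (ham : ∀ u ∈ Set.Icc c d, m ≤ a u)
    (hw0 : ∀ u ∈ Set.Icc c d, 0 ≤ w u)
    (hwint : IntervalIntegrable w volume c d)
    (hkey : ∀ s s', c ≤ s → s ≤ s' → s' ≤ d → a s' * ∫ u in s..s', w u ≤ a s - a s') :
    ∫ u in c..d, w u ≤ Real.log (a c) - Real.log (a d) := by
  have hwsub : ∀ {s s' : ℝ}, c ≤ s → s ≤ s' → s' ≤ d → IntervalIntegrable w volume s s' := by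
    intro s s' hs hss' hs'd
    exact hwint.mono_set (by rw [Set.uIcc_of_le hss', Set.uIcc_of_le hcd]
                             exact Set.Icc_subset_Icc hs hs'd)
  set I := ∫ u in c..d, w u with hI
  have hI0 : 0 ≤ I := intervalIntegral.integral_nonneg hcd hw0
  set L := Real.log (a c) - Real.log (a d) with hL
  suffices H : ∀ ε : ℝ, 0 < ε → I ≤ (1 + ε) * L by
    have hL0 : 0 ≤ L := by have := H 1 (by norm_num); linarith
    by_contra hcon
    push_neg at hcon
    have hε : 0 < (I - L) / (2 * (L + 1)) := by
      apply div_pos (by linarith) (by linarith)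
    have := H _ hε
    have h2 : (1 + (I - L) / (2 * (L + 1))) * L = L + (I - L) * (L / (2 * (L + 1))) := by
      field_simp
    have h3 : L / (2 * (L + 1)) ≤ 1 / 2 := by
      rw [div_le_div_iff₀ (by linarith) (by norm_num)]; linarith
    nlinarith
  intro ε hε
  obtain ⟨δ, hδ, hδ'⟩ := Metric.uniformContinuousOn_iff.1
    ((isCompact_Icc).uniformContinuousOn_of_continuous ha_cont) (ε * m) (by positivity)
  obtain ⟨n, hn⟩ := exists_nat_gt ((d - c) / δ)
  set N : ℕ := n + 1 with hNdef
  have hNpos : (0:ℝ) < N := by positivity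
  have hstep_lt : (d - c) / N < δ := by
    rw [div_lt_iff₀ hNpos]
    have h1 : (d - c) / δ < N := lt_of_lt_of_le hn (by exact_mod_cast Nat.le_succ n)
    have h2 : (d - c) / δ * δ < ↑N * δ := mul_lt_mul_of_pos_right h1 hδ
    rw [div_mul_cancel₀ _ hδ.ne'] at h2
    linarith
  have hstep0 : 0 ≤ (d - c) / N := div_nonneg (by linarith) hNpos.le
  set p : ℕ → ℝ := fun i => c + i * ((d - c) / N) with hp
  have hp0 : p 0 = c := by simp [hp]
  have hpN : p N = d := by simp only [hp]; rw [show (N:ℝ) * ((d - c) / N) = d - c by field_simp]; ring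
  have hpmem : ∀ i : ℕ, i ≤ N → p i ∈ Set.Icc c d := by
    intro i hi
    constructor
    · simp only [hp]; nlinarith [Nat.cast_nonneg (α := ℝ) i]
    · have hi' : (i : ℝ) ≤ N := by exact_mod_cast hi
      have h1 : (i:ℝ) * ((d - c) / N) ≤ (N:ℝ) * ((d - c) / N) :=
        mul_le_mul_of_nonneg_right hi' hstep0
      have h2 : (N:ℝ) * ((d - c) / N) = d - c := by field_simp
      simp only [hp]
      linarith
  have hpsucc : ∀ i : ℕ, p (i + 1) - p i = (d - c) / N := by
    intro i; simp only [hp]; push_cast; ring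
  clear_value p
  have hple : ∀ i : ℕ, p i ≤ p (i + 1) := by
    intro i
    have := hpsucc i
    linarith [hstep0, this]
  set W : ℝ → ℝ := fun x => ∫ u in c..x, w u with hW
  have hWdiff : ∀ i : ℕ, i + 1 ≤ N →
      W (p (i+1)) - W (p i) = ∫ u in (p i)..(p (i+1)), w u := by
    intro i hi
    exact integral_interval_sub_left
      (hwsub le_rfl (hpmem _ hi).1 (hpmem _ hi).2)
      (hwsub le_rfl (hpmem i (by omega)).1 (hpmem i (by omega)).2)
  have hsum1 : ∑ i ∈ Finset.range N, (W (p (i+1)) - W (p i)) = I := by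
    have := Finset.sum_range_sub (fun i => W (p i)) N
    rw [this, hp0, hpN]
    simp [hW, hI]
  have hsum2 : L = ∑ i ∈ Finset.range N, (Real.log (a (p i)) - Real.log (a (p (i+1)))) := by
    rw [Finset.sum_range_sub' (fun i => Real.log (a (p i))) N, hp0, hpN]
  have hterm : ∀ i ∈ Finset.range N,
      W (p (i+1)) - W (p i) ≤ (1 + ε) * (Real.log (a (p i)) - Real.log (a (p (i+1)))) := by
    intro i hi
    rw [Finset.mem_range] at hi
    have hi1 : i + 1 ≤ N := hi
    have hmi : p i ∈ Set.Icc c d := hpmem i (by omega)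
    have hmi1 : p (i+1) ∈ Set.Icc c d := hpmem (i+1) hi1
    have hii1 : p i ≤ p (i+1) := hple i
    have hai : 0 < a (p i) := lt_of_lt_of_le hm (ham _ hmi)
    have hai1 : 0 < a (p (i+1)) := lt_of_lt_of_le hm (ham _ hmi1)
    have hdist : dist (p i) (p (i+1)) < δ := by
      rw [Real.dist_eq, abs_sub_comm, abs_of_nonneg (by linarith [hple i])]
      rw [hpsucc i]; exact hstep_lt
    have hclose := hδ' _ hmi _ hmi1 hdist
    rw [Real.dist_eq] at hclose
    have hratio : a (p i) ≤ (1 + ε) * a (p (i+1)) := by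
      have h1 : a (p i) - a (p (i+1)) ≤ ε * m := le_of_lt (lt_of_le_of_lt (le_abs_self _) hclose)
      have h2 : m ≤ a (p (i+1)) := ham _ hmi1
      nlinarith
    have hΔ0 : 0 ≤ W (p (i+1)) - W (p i) := by
      rw [hWdiff i hi1]
      exact intervalIntegral.integral_nonneg hii1
        (fun u hu => hw0 u ⟨le_trans hmi.1 hu.1, le_trans hu.2 hmi1.2⟩)
    have hkey_i : a (p (i+1)) * (W (p (i+1)) - W (p i)) ≤ a (p i) - a (p (i+1)) := by
      rw [hWdiff i hi1]
      exact hkey _ _ hmi.1 hii1 hmi1.2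
    have hxy0 : 0 ≤ a (p i) - a (p (i+1)) :=
      le_trans (mul_nonneg hai1.le hΔ0) hkey_i
    have hlog : (a (p i) - a (p (i+1))) / a (p i)
        ≤ Real.log (a (p i)) - Real.log (a (p (i+1))) := by
      have h := Real.log_le_sub_one_of_pos (div_pos hai1 hai)
      rw [Real.log_div hai1.ne' hai.ne'] at h
      have : a (p (i+1)) / a (p i) - 1 = -((a (p i) - a (p (i+1))) / a (p i)) := by
        field_simp
        ring
      rw [this] at h
      linarith
    have hT0 : 0 ≤ Real.log (a (p i)) - Real.log (a (p (i+1))) :=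
      le_trans (div_nonneg hxy0 hai.le) hlog
    have hxy : a (p i) - a (p (i+1))
        ≤ (Real.log (a (p i)) - Real.log (a (p (i+1)))) * a (p i) := by
      rw [← div_le_iff₀ hai]
      exact hlog
    nlinarith [hkey_i, hxy, mul_le_mul_of_nonneg_left hratio hT0, hΔ0,
      mul_pos hai hai1]
  calc I = ∑ i ∈ Finset.range N, (W (p (i+1)) - W (p i)) := hsum1.symm
  _ ≤ ∑ i ∈ Finset.range N, (1 + ε) * (Real.log (a (p i)) - Real.log (a (p (i+1)))) :=
      Finset.sum_le_sum hterm
  _ = (1 + ε) * ∑ i ∈ Finset.range N, (Real.log (a (p i)) - Real.log (a (p (i+1)))) := by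
      rw [Finset.mul_sum]
  _ = (1 + ε) * L := by rw [← hsum2]
section LebDiff

open Filter Topology

lemma ae_eq_deriv_aux {g Q : ℝ → ℝ}
    (hg : IntervalIntegrable g volume 0 1)
    (hrep : ∀ x ∈ Iu, Q x = Q 0 + ∫ t in (0:ℝ)..x, g t) :
    ∀ᵐ x : ℝ, x ∈ Set.Ioo (0:ℝ) 1 → ∀ D : ℝ, HasDerivAt Q D x → g x = D := by
  set g' := Set.indicator (Set.Ioo (0:ℝ) 1) g with hg'
  have hgint : IntegrableOn g (Set.Ioo 0 1) volume := hg.1.mono_set Set.Ioo_subset_Ioc_self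
  have hint : Integrable g' volume := hgint.integrable_indicator measurableSet_Ioo
  have hloc : MeasureTheory.LocallyIntegrable g' volume := hint.locallyIntegrable
  have hld := (IsUnifLocDoublingMeasure.vitaliFamily (volume : Measure ℝ) 1).ae_tendsto_average hloc
  filter_upwards [hld] with x hx hxmem D hD
  have h1 : Tendsto (fun y => ⨍ t in Set.Icc x y, g' t) (𝓝[>] x) (𝓝 (g' x)) :=
    hx.comp (Real.tendsto_Icc_vitaliFamily_right x)
  have h2 : Tendsto (fun y => (Q y - Q x) / (y - x)) (𝓝[>] x) (𝓝 D) := by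
    have h := hasDerivAt_iff_tendsto_slope.1 hD
    have hmono : 𝓝[>] x ≤ 𝓝[≠] x :=
      nhdsWithin_mono x (fun y hy => ne_of_gt hy)
    exact (h.mono_left hmono).congr (fun y => by rw [slope_def_field])
  have hev : ∀ᶠ y in 𝓝[>] x, ⨍ t in Set.Icc x y, g' t = (Q y - Q x) / (y - x) := by
    filter_upwards [Ioo_mem_nhdsGT_of_mem (⟨le_refl x, hxmem.2⟩ : x ∈ Set.Ico x 1)]
      with y hy
    have hxy : x < y := hy.1
    have hQint : ∀ z ∈ Iu, IntervalIntegrable g volume 0 z := by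
      intro z hz
      exact hg.mono_set (by rw [Set.uIcc_of_le hz.1, Set.uIcc_of_le (by norm_num : (0:ℝ) ≤ 1)]
                            exact Set.Icc_subset_Icc le_rfl hz.2)
    have hxIu : x ∈ Iu := ⟨hxmem.1.le, hxmem.2.le⟩
    have hyIu : y ∈ Iu := ⟨(lt_trans hxmem.1 hxy).le, hy.2.le⟩
    have hsub : Set.Icc x y ⊆ Set.Ioo (0:ℝ) 1 := fun t ht =>
      ⟨lt_of_lt_of_le hxmem.1 ht.1, lt_of_le_of_lt ht.2 hy.2⟩
    have e1 : ∫ t in Set.Icc x y, g' t = ∫ t in Set.Icc x y, g t := by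
      apply MeasureTheory.setIntegral_congr_fun measurableSet_Icc
      intro t ht
      exact Set.indicator_of_mem (hsub ht) g
    have e2 : ∫ t in Set.Icc x y, g t = ∫ t in x..y, g t := by
      rw [MeasureTheory.integral_Icc_eq_integral_Ioc, intervalIntegral.integral_of_le hxy.le]
    have e3 : ∫ t in x..y, g t = Q y - Q x := by
      rw [hrep y hyIu, hrep x hxIu]
      rw [← intervalIntegral.integral_interval_sub_left (hQint y hyIu) (hQint x hxIu)]
      ring
    rw [MeasureTheory.setAverage_eq, e1, e2, e3, Real.volume_real_Icc_of_le hxy.le, smul_eq_mul]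
    rw [div_eq_inv_mul]
  have := tendsto_nhds_unique (h1.congr' hev) h2
  rw [← this, hg', Set.indicator_of_mem hxmem]

end LebDiff

/-- Lemma: optimality of `Q*` against `H*`: for every value `v ∈ [0,1]`,
every bid `Q*(y)` with `y ∈ [0,1]` and `F⁻(y) = v` maximizes the expected utility
`b ↦ (v − b)·H*(b)` over bids `b ∈ [0,1]`. -/
theorem quantile_bids_optimal_against_Hstar
    (F : Measure ℝ) (hF : IsProbOn F) (hF0 : F {0} = 0)
    (Q : ℝ → ℝ) (hQac : AbsContOn01 Q) (hQmono : StrictMonoOn Q Iu)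
    (hQmaps : MapsTo Q Iu Iu) (hQ0 : Q 0 = 0)
    (hQbd : ∀ y ∈ Set.Ioc (0:ℝ) 1, 0 < Q y ∧ Q y < qinv F y)
    (hode : ∀ᵐ y ∂(volume.restrict Iu),
      HasDerivAt Q ((qinv F y - Q y) / (1 - cdf01 F (Q y))) y) :
    ∀ v ∈ Iu, ∀ y ∈ Iu, qinv F y = v →
      ∀ b ∈ Iu, (v - b) * HstarCDF F Q b ≤ (v - Q y) * HstarCDF F Q (Q y) := by
  have h0Iu : (0:ℝ) ∈ Iu := ⟨le_rfl, zero_le_one⟩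
  have h1Iu : (1:ℝ) ∈ Iu := ⟨zero_le_one, le_rfl⟩
  set w : ℝ → ℝ := fun u => 1 / (1 - cdf01 F (Q u)) with hwdef
  have hQmonoOn : MonotoneOn Q Iu := hQmono.monotoneOn
  -- the denominator is bounded away from 0
  have hcQ1 : cdf01 F (Q 1) < 1 := by
    by_contra hcon
    push_neg at hcon
    have := qinv_le_of_mem (hQmaps h1Iu) hcon
    exact absurd this (not_le.2 (hQbd 1 ⟨one_pos, le_rfl⟩).2)
  have hden : ∀ u ∈ Iu, 1 - cdf01 F (Q 1) ≤ 1 - cdf01 F (Q u) := by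
    intro u hu
    have : cdf01 F (Q u) ≤ cdf01 F (Q 1) := cdf01_mono hF (hQmonoOn hu h1Iu hu.2)
    linarith
  have hdenpos : ∀ u ∈ Iu, 0 < 1 - cdf01 F (Q u) := fun u hu =>
    lt_of_lt_of_le (by linarith) (hden u hu)
  have hwpos : ∀ u ∈ Iu, 0 < w u := fun u hu => one_div_pos.2 (hdenpos u hu)
  have hwmono : MonotoneOn w Iu := by
    intro u hu u' hu' huu'
    apply one_div_le_one_div_of_le (hdenpos u' hu')
    have : cdf01 F (Q u) ≤ cdf01 F (Q u') := cdf01_mono hF (hQmonoOn hu hu' huu')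
    linarith
  have hsubIu : ∀ {s s' : ℝ}, s ∈ Iu → s' ∈ Iu → Set.uIcc s s' ⊆ Iu := by
    intro s s' hs hs'
    rw [Set.uIcc]
    exact Set.Icc_subset_Icc (le_inf hs.1 hs'.1) (sup_le hs.2 hs'.2)
  have hwint : ∀ {s s' : ℝ}, s ∈ Iu → s' ∈ Iu → IntervalIntegrable w volume s s' :=
    fun hs hs' => (hwmono.mono (hsubIu hs hs')).intervalIntegrable
  obtain ⟨g, hgint, hrep⟩ := hQac
  have hgsub : ∀ {s s' : ℝ}, s ∈ Iu → s' ∈ Iu → IntervalIntegrable g volume s s' := by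
    intro s s' hs hs'
    apply hgint.mono_set
    rw [Set.uIcc_of_le (zero_le_one)]
    exact hsubIu hs hs'
  have hQinc : ∀ s ∈ Iu, ∀ s' ∈ Iu, Q s' - Q s = ∫ u in s..s', g u := by
    intro s hs s' hs'
    rw [hrep s' hs', hrep s hs,
      ← intervalIntegral.integral_interval_sub_left (hgsub h0Iu hs') (hgsub h0Iu hs)]
    ring
  have hQcont : ContinuousOn Q Iu := by
    have hc : ContinuousOn (fun x => Q 0 + ∫ t in (0:ℝ)..x, g t) (Set.uIcc (0:ℝ) 1) :=
      continuousOn_const.add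
        (intervalIntegral.continuousOn_primitive_interval' hgint Set.left_mem_uIcc)
    rw [Set.uIcc_of_le zero_le_one] at hc
    exact hc.congr (fun x hx => hrep x hx)
  have h0ae : ∀ᵐ u : ℝ, u ≠ (0:ℝ) := by
    rw [ae_iff]
    have he : {u : ℝ | ¬ u ≠ 0} = {0} := by ext u; simp
    rw [he]
    exact Real.volume_singleton
  have h1ae : ∀ᵐ u : ℝ, u ≠ (1:ℝ) := by
    rw [ae_iff]
    have he : {u : ℝ | ¬ u ≠ 1} = {1} := by ext u; simp
    rw [he]
    exact Real.volume_singleton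
  have hodes : ∀ᵐ u : ℝ, u ∈ Iu →
      HasDerivAt Q ((qinv F u - Q u) / (1 - cdf01 F (Q u))) u :=
    (ae_restrict_iff' measurableSet_Icc).1 hode
  have hgeq : ∀ᵐ u : ℝ, u ∈ Set.Ioo (0:ℝ) 1 → g u = (qinv F u - Q u) * w u := by
    filter_upwards [ae_eq_deriv_aux hgint hrep, hodes] with u h1 h2 hu
    have := h1 hu _ (h2 ⟨hu.1.le, hu.2.le⟩)
    rw [this, div_eq_mul_one_div]
  -- the identity for HstarCDF at bids Q t
  have hHQ : ∀ t ∈ Iu, HstarCDF F Q (Q t) = Real.exp (-(∫ u in t..(1:ℝ), w u)) := by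
    intro t ht
    by_cases ht1 : t = 1
    · subst ht1
      rw [HstarCDF, if_pos le_rfl, intervalIntegral.integral_same]
      norm_num
    · have htlt : t < 1 := lt_of_le_of_ne ht.2 ht1
      rw [HstarCDF, if_neg (not_le.2 (hQmono ht h1Iu htlt)), Hstar,
        hQmono.injOn.leftInvOn_invFunOn ht]
  have hH0 : ∀ x : ℝ, 0 ≤ HstarCDF F Q x := by
    intro x
    rw [HstarCDF]
    split
    · norm_num
    · exact (Real.exp_pos _).le
  intro v hv y hy hqy b hb
  by_cases hy0 : y = 0
  · -- degenerate case: v = 0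
    subst hy0
    have hv0 : v = 0 := by rw [← hqy, qinv_zero hF]
    subst hv0
    rw [hQ0, sub_zero, zero_mul]
    exact mul_nonpos_iff.2 (Or.inr ⟨by linarith [hb.1], hH0 b⟩)
  · have hy0' : 0 < y := lt_of_le_of_ne hy.1 (Ne.symm hy0)
    have hQyv : Q y < v := by rw [← hqy]; exact (hQbd y ⟨hy0', hy.2⟩).2
    have hQy0 : 0 < Q y := (hQbd y ⟨hy0', hy.2⟩).1
    have hv0 : 0 < v := lt_trans hQy0 hQyv
    have hRHS : (v - Q y) * HstarCDF F Q (Q y)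
        = (v - Q y) * Real.exp (-(∫ u in y..(1:ℝ), w u)) := by rw [hHQ y hy]
    -- claim A: for t ≤ y
    have hcompA : ∀ t, 0 ≤ t → t ≤ y →
        (v - Q t) * Real.exp (-(∫ u in t..(1:ℝ), w u))
          ≤ (v - Q y) * Real.exp (-(∫ u in y..(1:ℝ), w u)) := by
      intro t ht0 hty
      have htIu : t ∈ Iu := ⟨ht0, le_trans hty hy.2⟩
      have hIccIu : Set.Icc t y ⊆ Iu := Set.Icc_subset_Icc ht0 hy.2
      have hlog := log_core_le (a := fun u => v - Q u) (w := w) hty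
        (continuousOn_const.sub (hQcont.mono hIccIu))
        (m := v - Q y) (by linarith)
        (fun u hu => by
          have : Q u ≤ Q y := hQmonoOn (hIccIu hu) hy hu.2
          linarith)
        (fun u hu => (hwpos u (hIccIu hu)).le)
        (hwint htIu hy)
        ?_
      · -- conclude from the log inequality
        have haty : 0 < v - Q y := by linarith
        have hatt : 0 < v - Q t := by
          have : Q t ≤ Q y := hQmonoOn htIu hy hty
          linarith
        have hat : v - Q t ≤ (v - Q y) * Real.exp (∫ u in t..y, w u) := by
          have h1 : Real.log (v - Q t) ≤ Real.log (v - Q y) + ∫ u in t..y, w u := by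
            linarith [hlog]
          calc v - Q t = Real.exp (Real.log (v - Q t)) := (Real.exp_log hatt).symm
          _ ≤ Real.exp (Real.log (v - Q y) + ∫ u in t..y, w u) := Real.exp_le_exp.2 h1
          _ = (v - Q y) * Real.exp (∫ u in t..y, w u) := by
              rw [Real.exp_add, Real.exp_log haty]
        have e1 : (∫ u in t..y, w u) + ∫ u in y..(1:ℝ), w u = ∫ u in t..(1:ℝ), w u :=
          intervalIntegral.integral_add_adjacent_intervals (hwint htIu hy) (hwint hy h1Iu)
        calc (v - Q t) * Real.exp (-(∫ u in t..(1:ℝ), w u))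
            ≤ ((v - Q y) * Real.exp (∫ u in t..y, w u)) * Real.exp (-(∫ u in t..(1:ℝ), w u)) :=
              mul_le_mul_of_nonneg_right hat (Real.exp_nonneg _)
        _ = (v - Q y) * Real.exp ((∫ u in t..y, w u) + -(∫ u in t..(1:ℝ), w u)) := by
            rw [Real.exp_add]; ring
        _ = (v - Q y) * Real.exp (-(∫ u in y..(1:ℝ), w u)) := by
            rw [show (∫ u in t..y, w u) + -(∫ u in t..(1:ℝ), w u)
                = -(∫ u in y..(1:ℝ), w u) by linarith [e1]]
      · -- the key increment estimate
        intro s s' hts hss' hs'y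
        have hsIu : s ∈ Iu := ⟨le_trans ht0 hts, le_trans (le_trans hss' hs'y) hy.2⟩
        have hs'Iu : s' ∈ Iu := ⟨le_trans hsIu.1 hss', le_trans hs'y hy.2⟩
        have hLHS : (v - Q s) - (v - Q s') = ∫ u in s..s', g u := by
          have := hQinc s hsIu s' hs'Iu; linarith
        rw [hLHS]
        have hmono := intervalIntegral.integral_mono_ae_restrict hss'
          (hgsub hsIu hs'Iu) ((hwint hsIu hs'Iu).const_mul (v - Q s)) ?_
        · calc (∫ u in s..s', g u) ≤ ∫ u in s..s', (v - Q s) * w u := hmono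
          _ = (v - Q s) * ∫ u in s..s', w u := intervalIntegral.integral_const_mul _ _
        · -- a.e. bound on [s,s']
          filter_upwards [ae_restrict_of_ae (hgeq.and (h0ae.and h1ae)),
            ae_restrict_mem measurableSet_Icc] with u hu hmem
          have huIu : u ∈ Iu := ⟨le_trans hsIu.1 hmem.1, le_trans hmem.2 hs'Iu.2⟩
          have huIoo : u ∈ Set.Ioo (0:ℝ) 1 :=
            ⟨lt_of_le_of_ne huIu.1 (Ne.symm hu.2.1), lt_of_le_of_ne huIu.2 hu.2.2⟩
          have hgu : g u = (qinv F u - Q u) * w u := hu.1 huIoo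
          have hq1 : qinv F u ≤ v := by
            rw [← hqy]
            exact qinv_mono hF (le_trans hmem.2 hs'y) hy.2
          have hq2 : Q s ≤ Q u := hQmonoOn hsIu huIu hmem.1
          have hw0 : 0 ≤ w u := (hwpos u huIu).le
          calc g u = (qinv F u - Q u) * w u := hgu
          _ ≤ (v - Q s) * w u := by nlinarith
    -- claim B: for t ≥ y with positive margin
    have hcompB : ∀ t, y ≤ t → t ≤ 1 → 0 < v - Q t →
        (v - Q t) * Real.exp (-(∫ u in t..(1:ℝ), w u))
          ≤ (v - Q y) * Real.exp (-(∫ u in y..(1:ℝ), w u)) := by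
      intro t hyt ht1 hvQt
      have htIu : t ∈ Iu := ⟨le_trans hy.1 hyt, ht1⟩
      have hIccIu : Set.Icc y t ⊆ Iu := Set.Icc_subset_Icc hy.1 ht1
      have hlog := log_core_ge (a := fun u => v - Q u) (w := w) hyt
        (continuousOn_const.sub (hQcont.mono hIccIu))
        (m := v - Q t) hvQt
        (fun u hu => by
          have : Q u ≤ Q t := hQmonoOn (hIccIu hu) htIu hu.2
          linarith)
        (fun u hu => (hwpos u (hIccIu hu)).le)
        (hwint hy htIu)
        ?_
      · have haty : 0 < v - Q y := by linarith
        have hat : v - Q t ≤ (v - Q y) * Real.exp (-(∫ u in y..t, w u)) := by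
          have h1 : Real.log (v - Q t) ≤ Real.log (v - Q y) - ∫ u in y..t, w u := by
            linarith
          calc v - Q t = Real.exp (Real.log (v - Q t)) := (Real.exp_log hvQt).symm
          _ ≤ Real.exp (Real.log (v - Q y) + -(∫ u in y..t, w u)) :=
              Real.exp_le_exp.2 (by linarith)
          _ = (v - Q y) * Real.exp (-(∫ u in y..t, w u)) := by
              rw [Real.exp_add, Real.exp_log haty]
        have e1 : (∫ u in y..t, w u) + ∫ u in t..(1:ℝ), w u = ∫ u in y..(1:ℝ), w u :=
          intervalIntegral.integral_add_adjacent_intervals (hwint hy htIu) (hwint htIu h1Iu)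
        calc (v - Q t) * Real.exp (-(∫ u in t..(1:ℝ), w u))
            ≤ ((v - Q y) * Real.exp (-(∫ u in y..t, w u))) * Real.exp (-(∫ u in t..(1:ℝ), w u)) :=
              mul_le_mul_of_nonneg_right hat (Real.exp_nonneg _)
        _ = (v - Q y) * Real.exp (-(∫ u in y..t, w u) + -(∫ u in t..(1:ℝ), w u)) := by
            rw [Real.exp_add]; ring
        _ = (v - Q y) * Real.exp (-(∫ u in y..(1:ℝ), w u)) := by
            rw [show -(∫ u in y..t, w u) + -(∫ u in t..(1:ℝ), w u)
                = -(∫ u in y..(1:ℝ), w u) by linarith [e1]]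
      · intro s s' hys hss' hs't
        have hsIu : s ∈ Iu := ⟨le_trans hy.1 hys, le_trans (le_trans hss' hs't) ht1⟩
        have hs'Iu : s' ∈ Iu := ⟨le_trans hsIu.1 hss', le_trans hs't ht1⟩
        have hLHS : (v - Q s) - (v - Q s') = ∫ u in s..s', g u := by
          have := hQinc s hsIu s' hs'Iu; linarith
        rw [hLHS]
        have hmono := intervalIntegral.integral_mono_ae_restrict hss'
          ((hwint hsIu hs'Iu).const_mul (v - Q s')) (hgsub hsIu hs'Iu) ?_
        · calc (v - Q s') * ∫ u in s..s', w u
              = ∫ u in s..s', (v - Q s') * w u := (intervalIntegral.integral_const_mul _ _).symm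
          _ ≤ ∫ u in s..s', g u := hmono
        · filter_upwards [ae_restrict_of_ae (hgeq.and (h0ae.and h1ae)),
            ae_restrict_mem measurableSet_Icc] with u hu hmem
          have huIu : u ∈ Iu := ⟨le_trans hsIu.1 hmem.1, le_trans hmem.2 hs'Iu.2⟩
          have huIoo : u ∈ Set.Ioo (0:ℝ) 1 :=
            ⟨lt_of_le_of_ne huIu.1 (Ne.symm hu.2.1), lt_of_le_of_ne huIu.2 hu.2.2⟩
          have hgu : g u = (qinv F u - Q u) * w u := hu.1 huIoo
          have hq1 : v ≤ qinv F u := by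
            rw [← hqy]
            exact qinv_mono hF (le_trans hys hmem.1) huIu.2
          have hq2 : Q u ≤ Q s' := hQmonoOn huIu hs'Iu hmem.2
          have hw0 : 0 ≤ w u := (hwpos u huIu).le
          calc (v - Q s') * w u ≤ (qinv F u - Q u) * w u := by nlinarith
          _ = g u := hgu.symm
    -- final case analysis
    rw [hRHS]
    by_cases hvb : v ≤ b
    · -- bidding above value is never profitable
      have h1 : (v - b) * HstarCDF F Q b ≤ 0 :=
        mul_nonpos_iff.2 (Or.inr ⟨by linarith, hH0 b⟩)
      have h2 : 0 ≤ (v - Q y) * Real.exp (-(∫ u in y..(1:ℝ), w u)) :=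
        mul_nonneg (by linarith) (Real.exp_nonneg _)
      linarith
    · push_neg at hvb
      by_cases hQ1b : Q 1 ≤ b
      · -- b at or above the top bid
        rw [HstarCDF, if_pos hQ1b, mul_one]
        have hP1 := hcompB 1 hy.2 le_rfl (by linarith)
        rw [intervalIntegral.integral_same, neg_zero, Real.exp_zero, mul_one] at hP1
        linarith
      · -- b is in the range of Q
        push_neg at hQ1b
        have hbmem : b ∈ Set.Icc (Q 0) (Q 1) := ⟨by rw [hQ0]; exact hb.1, hQ1b.le⟩
        obtain ⟨t, htIu, hQt⟩ := intermediate_value_Icc zero_le_one hQcont hbmem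
        have ht1 : t < 1 := by
          rcases lt_or_eq_of_le htIu.2 with h | h
          · exact h
          · exfalso; rw [h] at hQt; linarith
        rw [← hQt, hHQ t htIu]
        rcases le_or_gt t y with hty | hyt
        · exact hcompA t htIu.1 hty
        · exact hcompB t hyt.le htIu.2 (by rw [hQt]; linarith)

end FPA
end
end
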